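/- Tong's theorem: Let f : ℝ → ℝ be continuous on the closed interval [a,b] (with a < b) and differentiable on the open interval (a,b). If A_f(a,b) = I_f(a,b), then there exists a point η ∈ (a,b) such that f'(η) = (f(η) - f(a))/(η - a). -/

import Mathlib

open intervalIntegral in
/-- **Tong's theorem.** Let `f` be continuous on `[a,b]` and differentiable on `(a,b)`
with derivative `f'`. If the arithmetic mean `(f(a)+f(b))/2` equals the integral mean
`(1/(b-a)) ∫_a^b f`, then there exists `η ∈ (a,b)` with `f'(η) = (f(η)-f(a))/(η-a)`. -/
theorem tong_theorem (f f' : ℝ → ℝ) (a b : ℝ) (hab : a < b)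
    (hfc : ContinuousOn f (Set.Icc a b))
    (hf : ∀ x ∈ Set.Ioo a b, HasDerivAt f (f' x) x)
    (hmean : (f a + f b) / 2 = (1 / (b - a)) * ∫ t in a..b, f t) :
    ∃ η ∈ Set.Ioo a b, f' η = (f η - f a) / (η - a) := by
  set g : ℝ → ℝ := fun x => (x - a) * (f x + f a) / 2 - ∫ t in a..x, f t with hg
  set g' : ℝ → ℝ := fun x => (f x + f a) / 2 + (x - a) * f' x / 2 - f x with hg'
  have hint : MeasureTheory.IntegrableOn f (Set.uIcc a b) MeasureTheory.volume := by
    rw [Set.uIcc_of_le hab.le]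
    exact hfc.integrableOn_Icc
  have hgc : ContinuousOn g (Set.Icc a b) := by
    apply ContinuousOn.sub
    · exact (((continuousOn_id.sub continuousOn_const).mul
        (hfc.add continuousOn_const))).div_const 2
    · have := intervalIntegral.continuousOn_primitive_interval hint
      rwa [Set.uIcc_of_le hab.le] at this
  have hgd : ∀ x ∈ Set.Ioo a b, HasDerivAt g (g' x) x := by
    intro x hx
    have hxI : IntervalIntegrable f MeasureTheory.volume a x :=
      (hfc.mono (Set.Icc_subset_Icc le_rfl hx.2.le)).intervalIntegrable_of_Icc hx.1.le
    have hca : ContinuousAt f x :=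
      hfc.continuousAt (Icc_mem_nhds hx.1 hx.2)
    have h1 : HasDerivAt (fun u => ∫ t in a..u, f t) (f x) x :=
      intervalIntegral.integral_hasDerivAt_right hxI
        (ContinuousOn.stronglyMeasurableAtFilter isOpen_Ioo
          (hfc.mono Set.Ioo_subset_Icc_self) x hx) hca
    have h2 : HasDerivAt (fun u => (u - a) * (f u + f a) / 2)
        (((f x + f a) + (x - a) * f' x) / 2) x := by
      have := (((hasDerivAt_id x).sub_const a).mul ((hf x hx).add_const (f a))).div_const 2
      simpa [mul_comm] using this
    have := h2.sub h1
    refine this.congr_deriv ?_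
    show _ = (f x + f a) / 2 + (x - a) * f' x / 2 - f x
    ring
  have hgab : g a = g b := by
    have hb : (b : ℝ) - a ≠ 0 := sub_ne_zero.mpr hab.ne'
    simp only [hg, sub_self, zero_mul, intervalIntegral.integral_same, zero_div, sub_zero]
    have : (b - a) * ((f a + f b) / 2) = ∫ t in a..b, f t := by
      rw [hmean]; field_simp
    rw [show (b - a) * (f b + f a) / 2 = (b - a) * ((f a + f b) / 2) by ring, this]
    simp
  obtain ⟨η, hη, hη0⟩ := exists_hasDerivAt_eq_zero hab hgc hgab hgd
  refine ⟨η, hη, ?_⟩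
  have hne : η - a ≠ 0 := sub_ne_zero.mpr hη.1.ne'
  have : (η - a) * f' η / 2 = (f η - f a) / 2 := by
    have := hη0
    simp only [hg'] at this
    linarith
  field_simp at this ⊢
  linarith
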